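/- Let n ≥ 1 and let X̂ be an n×n complex unitary matrix with det(I + X̂) ≠ 0. Set Ẑ = X̂(X̂ − I)(X̂ + I)^{−3}. If Tr(Ẑ Σ) = 0 for every skew-Hermitian n×n complex matrix Σ, then X̂ = I. -/

import Mathlib

open Matrix

lemma trace_mul_std {n : ℕ} (Z : Matrix (Fin n) (Fin n) ℂ) (i j : Fin n) :
    (Z * Matrix.single j i 1).trace = Z i j := by
  simp [Matrix.trace, Matrix.diag, Matrix.mul_apply, Matrix.single, ite_and]

/-- Let `X̂` be unitary with `det (I + X̂) ≠ 0` and set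
`Ẑ = X̂ (X̂ - I) (X̂ + I)⁻³`.  If `Tr (Ẑ Σ) = 0` for every skew-Hermitian matrix `Σ`, then
`X̂ = I`. -/
theorem trace_vanishing_implies_identity (n : ℕ) (hn : 1 ≤ n)
    (X : Matrix (Fin n) (Fin n) ℂ)
    (hX : X ∈ Matrix.unitaryGroup (Fin n) ℂ)
    (hdet : (1 + X).det ≠ 0)
    (Z : Matrix (Fin n) (Fin n) ℂ)
    (hZ : Z = X * (X - 1) * ((X + 1)⁻¹ * (X + 1)⁻¹ * (X + 1)⁻¹))
    (htr : ∀ Sig : Matrix (Fin n) (Fin n) ℂ, Sigᴴ = -Sig → (Z * Sig).trace = 0) :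
    X = 1 := by
  -- Step 1: trace (Z * M) = 0 for all M
  have hall : ∀ M : Matrix (Fin n) (Fin n) ℂ, (Z * M).trace = 0 := by
    intro M
    have h1 : (M - Mᴴ)ᴴ = -(M - Mᴴ) := by
      rw [conjTranspose_sub, conjTranspose_conjTranspose, neg_sub]
    have h2 : (Complex.I • (M + Mᴴ))ᴴ = -(Complex.I • (M + Mᴴ)) := by
      rw [conjTranspose_smul, conjTranspose_add, conjTranspose_conjTranspose]
      simp [Complex.conj_I, add_comm]
    have t1 := htr _ h1
    have t2 := htr _ h2
    have hdecomp : M = (2 : ℂ)⁻¹ • ((M - Mᴴ) - Complex.I • (Complex.I • (M + Mᴴ))) := by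
      rw [smul_smul, Complex.I_mul_I]
      ext i j
      simp
      ring
    conv_lhs => rw [hdecomp]
    rw [Matrix.mul_smul, Matrix.trace_smul, Matrix.mul_sub, Matrix.trace_sub, t1,
      Matrix.mul_smul, Matrix.trace_smul, t2]
    simp
  -- Step 2: Z = 0
  have hZ0 : Z = 0 := by
    ext i j
    have := hall (Matrix.single j i 1)
    rw [trace_mul_std] at this
    simpa using this
  -- Step 3: invertibility
  have hu1 : IsUnit (X + 1) := by
    rw [Matrix.isUnit_iff_isUnit_det]
    rw [add_comm]
    exact isUnit_iff_ne_zero.mpr hdet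
  have hdet1 : IsUnit (X + 1).det := by
    rw [add_comm]; exact isUnit_iff_ne_zero.mpr hdet
  have huX : X * star X = 1 := Matrix.mem_unitaryGroup_iff.mp hX
  have hXdet : IsUnit X.det := by
    apply isUnit_of_mul_isUnit_left (y := (star X).det)
    rw [← Matrix.det_mul, huX, Matrix.det_one]
    exact isUnit_one
  -- Step 4: conclude
  have key : X * (X - 1) = 0 := by
    have h0 : X * (X - 1) * ((X + 1)⁻¹ * (X + 1)⁻¹ * (X + 1)⁻¹)
        * ((X + 1) * ((X + 1) * (X + 1))) = 0 := by
      rw [← hZ, hZ0, Matrix.zero_mul]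
    calc X * (X - 1)
        = X * (X - 1) * ((X + 1)⁻¹ * (X + 1)⁻¹ * (X + 1)⁻¹)
            * ((X + 1) * ((X + 1) * (X + 1))) := by
          simp only [Matrix.mul_assoc]
          rw [Matrix.nonsing_inv_mul_cancel_left _ _ hdet1,
            Matrix.nonsing_inv_mul_cancel_left _ _ hdet1,
            Matrix.nonsing_inv_mul _ hdet1, Matrix.mul_one]
      _ = 0 := h0
  have key2 : X - 1 = 0 := by
    have := congrArg (fun M => X⁻¹ * M) key
    simpa [← Matrix.mul_assoc, Matrix.nonsing_inv_mul _ hXdet] using this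
  rw [sub_eq_zero] at key2
  exact key2
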